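/- arXiv:math/0310273 — 2 statements merged into one kernel-verified Lean document; each statement's English description precedes it below -/
import Mathlib

section
/- Let (a,b,e;c,d,f) be an admissible labeling of the edges of a tetrahedron with column sums C_1 ≥ C_2 ≥ C_3, and for an integer s define p'_s = 6(s − (a+b+c+d+e+f+1/2)/3)^2 − (1/6)(a^2+b^2+c^2+d^2+e^2+f^2) − (1/3)(ac+ef+bd) + (1/6)(ad+ae+de+bc+be+ce+ab+af+bf+cd+cf+df) + (1/3)(a+b+c+d+e+f) − 1/6. Then M = (C_2+C_3)/2, p'_M = (C_1−C_2)(C_1−C_3)/2 + C_1, and for every integer s with m ≤ s ≤ M one has p'_s ≥ (C_1−C_2)(C_1−C_3)/2 + C_1. -/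
open Filter Finset

/-- A triple of nonnegative integers is admissible if its sum is even and
it satisfies every triangle inequality. -/
def Admissible (a b c : ℕ) : Prop :=
  Even (a + b + c) ∧ a ≤ b + c ∧ b ≤ a + c ∧ c ≤ a + b

/-- A labeling (a,b,e;c,d,f) of the edges of a tetrahedron is admissible if the
four vertex triples (a,d,e), (b,c,e), (a,b,f), (c,d,f) are admissible. -/
def TetAdmissible (a b e c d f : ℕ) : Prop :=
  Admissible a d e ∧ Admissible b c e ∧ Admissible a b f ∧ Admissible c d f

/-- The quantized integer `[n] = (t^{2n} - t^{-2n})/(t^2 - t^{-2})`. -/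
noncomputable def qint (t : ℝ) (n : ℕ) : ℝ :=
  (t ^ (2 * n) - (t ^ (2 * n))⁻¹) / (t ^ 2 - (t ^ 2)⁻¹)

/-- The quantized factorial `[n]! = [n]·[n-1]!`, `[0]! = 1`. -/
noncomputable def qfact (t : ℝ) : ℕ → ℝ
  | 0 => 1
  | n + 1 => qint t (n + 1) * qfact t n

/-- `θ(a,b,c)` for an admissible triple. -/
noncomputable def qtheta (t : ℝ) (a b c : ℕ) : ℝ :=
  (-1 : ℝ) ^ ((a + b + c) / 2) *
    (qfact t ((a + b + c) / 2 + 1) * qfact t ((a + b - c) / 2) *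
      qfact t ((a + c - b) / 2) * qfact t ((b + c - a) / 2)) /
    (qfact t a * qfact t b * qfact t c)

/-- Product of the quantized factorials of the strand numbers of a triple. -/
noncomputable def strandProd (t : ℝ) (a b c : ℕ) : ℝ :=
  qfact t ((a + b - c) / 2) * qfact t ((b + c - a) / 2) * qfact t ((a + c - b) / 2)

/-- The tetrahedral coefficient `Tet(a,b,e;c,d,f)`. -/
noncomputable def Tet (t : ℝ) (a b e c d f : ℕ) : ℝ :=
  (strandProd t a d e * strandProd t b c e * strandProd t a b f * strandProd t c d f) /
      (qfact t a * qfact t b * qfact t c * qfact t d * qfact t e * qfact t f) *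
    ∑ s ∈ Finset.Icc
        (max ((a + d + e) / 2) (max ((b + c + e) / 2) (max ((a + b + f) / 2) ((c + d + f) / 2))))
        (min ((a + b + c + d) / 2) (min ((a + c + e + f) / 2) ((b + d + e + f) / 2))),
      ((-1 : ℝ) ^ s * qfact t (s + 1)) /
        (qfact t ((a + b + c + d) / 2 - s) * qfact t ((a + c + e + f) / 2 - s) *
          qfact t ((b + d + e + f) / 2 - s) *
          qfact t (s - (a + d + e) / 2) * qfact t (s - (b + c + e) / 2) *
          qfact t (s - (a + b + f) / 2) * qfact t (s - (c + d + f) / 2))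

/-- The unitary 6j-symbol `{a,b,e;c,d,f}_u`. -/
noncomputable def sixj (t : ℝ) (a b e c d f : ℕ) : ℝ :=
  Tet t a b e c d f /
    Real.sqrt (qtheta t a d e * qtheta t b c e * qtheta t a b f * qtheta t c d f)

/-- The q-Pochhammer symbol `(x;q)_n`. -/
noncomputable def qPoch (x q : ℝ) (n : ℕ) : ℝ := ∏ i ∈ Finset.range n, (1 - x * q ^ i)

/-- The infinite q-Pochhammer symbol `(x;q)_∞`. -/
noncomputable def qPochInf (x q : ℝ) : ℝ := ∏' i : ℕ, (1 - x * q ^ i)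


lemma mperm {x y z p q r : ℕ} (h : ({p,q,r}:Multiset ℕ) = {x,y,z}) :
    (p=x∧q=y∧r=z) ∨ (p=x∧q=z∧r=y) ∨ (p=y∧q=x∧r=z) ∨ (p=y∧q=z∧r=x) ∨ (p=z∧q=x∧r=y) ∨ (p=z∧q=y∧r=x) := by
  simp only [Multiset.insert_eq_cons, Multiset.cons_eq_cons, Multiset.singleton_eq_cons_iff] at h
  aesop

lemma part2eq (A B C D E F C1 C2 C3 M : ℝ)
    (hT : C1+C2+C3 = A+B+C+D+E+F)
    (hX : C1*C2+C1*C3+C2*C3 = A*D+A*E+D*E+B*C+B*E+C*E+A*B+A*F+B*F+C*D+C*F+D*F)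
    (hQ : C1^2+C2^2+C3^2 = A^2+B^2+C^2+D^2+E^2+F^2+2*(A*C+E*F+B*D))
    (hM : 2*M = C2+C3) :
    6*(M-((A+B+C+D+E+F)+1/2)/3)^2 - (1/6)*(A^2+B^2+C^2+D^2+E^2+F^2) - (1/3)*(A*C+E*F+B*D)
      + (1/6)*(A*D+A*E+D*E+B*C+B*E+C*E+A*B+A*F+B*F+C*D+C*F+D*F)
      + (1/3)*(A+B+C+D+E+F) - 1/6
      = (C1-C2)*(C1-C3)/2 + C1 := by
  have hM' : M = (C2+C3)/2 := by linarith
  subst hM'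
  rw [← hT]
  linear_combination ((1/6):ℝ)*hQ - (1/6)*hX

lemma part3ineq (A B C D E F C1 C2 C3 M s : ℝ)
    (hT : C1+C2+C3 = A+B+C+D+E+F)
    (hX : C1*C2+C1*C3+C2*C3 = A*D+A*E+D*E+B*C+B*E+C*E+A*B+A*F+B*F+C*D+C*F+D*F)
    (hQ : C1^2+C2^2+C3^2 = A^2+B^2+C^2+D^2+E^2+F^2+2*(A*C+E*F+B*D))
    (hM : 2*M = C2+C3) (h12 : C2 ≤ C1) (h23 : C3 ≤ C2) (hs : s ≤ M) :
    (C1-C2)*(C1-C3)/2 + C1 ≤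
      6*(s-((A+B+C+D+E+F)+1/2)/3)^2 - (1/6)*(A^2+B^2+C^2+D^2+E^2+F^2) - (1/3)*(A*C+E*F+B*D)
      + (1/6)*(A*D+A*E+D*E+B*C+B*E+C*E+A*B+A*F+B*F+C*D+C*F+D*F)
      + (1/3)*(A+B+C+D+E+F) - 1/6 := by
  rw [← part2eq A B C D E F C1 C2 C3 M hT hX hQ hM, ← hT]
  nlinarith [mul_nonneg (by linarith : (0:ℝ) ≤ M - s)
    (by linarith : (0:ℝ) ≤ 2*((C1+C2+C3+1/2)/3) - s - M)]

/-- For an admissible tetrahedral labeling with ordered column sums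
C₁ ≥ C₂ ≥ C₃, one has M = (C₂+C₃)/2, p'_M = (C₁−C₂)(C₁−C₃)/2 + C₁, and
p'_s ≥ (C₁−C₂)(C₁−C₃)/2 + C₁ for all m ≤ s ≤ M. -/
theorem stmt_7 (a b e c d f C1 C2 C3 : ℕ) (h : TetAdmissible a b e c d f)
    (hC : ({C1, C2, C3} : Multiset ℕ) = {a + c, b + d, e + f})
    (h12 : C2 ≤ C1) (h23 : C3 ≤ C2) :
    min ((a + b + c + d) / 2) (min ((a + c + e + f) / 2) ((b + d + e + f) / 2)) =
        (C2 + C3) / 2 ∧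
    (fun s : ℤ =>
        6 * ((s : ℝ) - (((a : ℝ) + b + c + d + e + f) + 1 / 2) / 3) ^ 2
          - (1 / 6) * ((a : ℝ) ^ 2 + (b : ℝ) ^ 2 + (c : ℝ) ^ 2 + (d : ℝ) ^ 2 +
              (e : ℝ) ^ 2 + (f : ℝ) ^ 2)
          - (1 / 3) * ((a : ℝ) * c + (e : ℝ) * f + (b : ℝ) * d)
          + (1 / 6) * ((a : ℝ) * d + (a : ℝ) * e + (d : ℝ) * e + (b : ℝ) * c +
              (b : ℝ) * e + (c : ℝ) * e + (a : ℝ) * b + (a : ℝ) * f + (b : ℝ) * f +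
              (c : ℝ) * d + (c : ℝ) * f + (d : ℝ) * f)
          + (1 / 3) * ((a : ℝ) + b + c + d + e + f) - 1 / 6)
        (((C2 + C3) / 2 : ℕ) : ℤ) =
      ((C1 : ℝ) - C2) * ((C1 : ℝ) - C3) / 2 + C1 ∧
    ∀ s : ℤ,
      ((max ((a + d + e) / 2) (max ((b + c + e) / 2) (max ((a + b + f) / 2) ((c + d + f) / 2))) :
          ℕ) : ℤ) ≤ s →
      s ≤ (((C2 + C3) / 2 : ℕ) : ℤ) →
      ((C1 : ℝ) - C2) * ((C1 : ℝ) - C3) / 2 + C1 ≤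
        (fun s : ℤ =>
          6 * ((s : ℝ) - (((a : ℝ) + b + c + d + e + f) + 1 / 2) / 3) ^ 2
            - (1 / 6) * ((a : ℝ) ^ 2 + (b : ℝ) ^ 2 + (c : ℝ) ^ 2 + (d : ℝ) ^ 2 +
                (e : ℝ) ^ 2 + (f : ℝ) ^ 2)
            - (1 / 3) * ((a : ℝ) * c + (e : ℝ) * f + (b : ℝ) * d)
            + (1 / 6) * ((a : ℝ) * d + (a : ℝ) * e + (d : ℝ) * e + (b : ℝ) * c +
                (b : ℝ) * e + (c : ℝ) * e + (a : ℝ) * b + (a : ℝ) * f + (b : ℝ) * f +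
                (c : ℝ) * d + (c : ℝ) * f + (d : ℝ) * f)
            + (1 / 3) * ((a : ℝ) + b + c + d + e + f) - 1 / 6) s := by

  obtain ⟨⟨hev1,-,-,-⟩,⟨hev2,-,-,-⟩,⟨hev3,-,-,-⟩,⟨hev4,-,-,-⟩⟩ := h
  obtain ⟨k1,hk1⟩ := hev1
  obtain ⟨k2,hk2⟩ := hev2
  obtain ⟨k3,hk3⟩ := hev3
  obtain ⟨k4,hk4⟩ := hev4
  have hperm := mperm hC
  have hpar : 2*((C2+C3)/2) = C2+C3 := by
    rcases hperm with ⟨h1,h2,h3⟩|⟨h1,h2,h3⟩|⟨h1,h2,h3⟩|⟨h1,h2,h3⟩|⟨h1,h2,h3⟩|⟨h1,h2,h3⟩ <;> omega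
  have hfacts : (C1:ℝ)+C2+C3 = (a:ℝ)+b+c+d+e+f ∧
      (C1:ℝ)*C2+(C1:ℝ)*C3+(C2:ℝ)*C3 = (a:ℝ)*d+(a:ℝ)*e+(d:ℝ)*e+(b:ℝ)*c+(b:ℝ)*e+(c:ℝ)*e
        +(a:ℝ)*b+(a:ℝ)*f+(b:ℝ)*f+(c:ℝ)*d+(c:ℝ)*f+(d:ℝ)*f ∧
      (C1:ℝ)^2+(C2:ℝ)^2+(C3:ℝ)^2 = (a:ℝ)^2+(b:ℝ)^2+(c:ℝ)^2+(d:ℝ)^2+(e:ℝ)^2+(f:ℝ)^2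
        +2*((a:ℝ)*c+(e:ℝ)*f+(b:ℝ)*d) := by
    rcases hperm with ⟨rfl,rfl,rfl⟩|⟨rfl,rfl,rfl⟩|⟨rfl,rfl,rfl⟩|⟨rfl,rfl,rfl⟩|⟨rfl,rfl,rfl⟩|⟨rfl,rfl,rfl⟩ <;>
      exact ⟨by push_cast; ring, by push_cast; ring, by push_cast; ring⟩
  obtain ⟨hT, hX, hQ⟩ := hfacts
  have hMr : 2*((((C2+C3)/2 : ℕ)):ℝ) = (C2:ℝ)+C3 := by
    exact_mod_cast congrArg (Nat.cast : ℕ → ℝ) hpar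
  have h12r : (C2:ℝ) ≤ C1 := by exact_mod_cast h12
  have h23r : (C3:ℝ) ≤ C2 := by exact_mod_cast h23
  refine ⟨?_, ?_, ?_⟩
  · rcases hperm with ⟨h1,h2,h3⟩|⟨h1,h2,h3⟩|⟨h1,h2,h3⟩|⟨h1,h2,h3⟩|⟨h1,h2,h3⟩|⟨h1,h2,h3⟩ <;> omega
  · have := part2eq (a:ℝ) b c d e f C1 C2 C3 ((((C2+C3)/2 : ℕ)):ℝ) hT hX hQ hMr
    simp only [Int.cast_natCast]
    linarith [this]
  · intro s hms hsM
    have hsr : (s:ℝ) ≤ ((((C2+C3)/2 : ℕ)):ℝ) := by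
      have h' := (@Int.cast_le ℝ _ _ _).2 hsM
      rwa [Int.cast_natCast] at h'
    have := part3ineq (a:ℝ) b c d e f C1 C2 C3 ((((C2+C3)/2 : ℕ)):ℝ) (s:ℝ)
      hT hX hQ hMr h12r h23r hsr
    simp only []
    linarith [this]
end

section
/- Let C_1 ≥ C_2 ≥ C_3 be nonnegative integers such that C_1−C_2 and C_1−C_3 are even. Then 3C_1 − C_2 − C_3 − gcd(C_1−C_2, C_1−C_3) ≤ (C_1−C_2)(C_1−C_3)/2 + C_1, with the convention gcd(0,n) = n and gcd(0,0) = 0. -/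
open Filter Finset

/-- For C₁ ≥ C₂ ≥ C₃ with C₁−C₂ and C₁−C₃ even,
3C₁ − C₂ − C₃ − gcd(C₁−C₂, C₁−C₃) ≤ (C₁−C₂)(C₁−C₃)/2 + C₁. -/
theorem stmt_15 (C1 C2 C3 : ℕ) (h12 : C2 ≤ C1) (h23 : C3 ≤ C2)
    (he1 : Even (C1 - C2)) (he2 : Even (C1 - C3)) :
    3 * C1 - C2 - C3 - Nat.gcd (C1 - C2) (C1 - C3) ≤
      (C1 - C2) * (C1 - C3) / 2 + C1 := by
  obtain ⟨a, ha⟩ := he1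
  obtain ⟨b, hb⟩ := he2
  have hg : Nat.gcd (C1 - C2) (C1 - C3) = 2 * Nat.gcd a b := by
    rw [ha, hb, show a + a = 2 * a from by ring, show b + b = 2 * b from by ring,
      Nat.gcd_mul_left]
  have key : a + b ≤ a * b + Nat.gcd a b := by
    rcases Nat.eq_zero_or_pos a with h | h
    · simp [h]
    rcases Nat.eq_zero_or_pos b with h' | h'
    · simp [h']
    have hgpos : 1 ≤ Nat.gcd a b := Nat.gcd_pos_of_pos_left _ h
    nlinarith
  have hdiv : (C1 - C2) * (C1 - C3) / 2 = 2 * (a * b) := by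
    rw [ha, hb, show (a + a) * (b + b) = 2 * (a * b) * 2 from by ring,
      Nat.mul_div_cancel _ two_pos]
  set p := a * b
  set g := Nat.gcd a b
  omega
end
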